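/- Let C be a skew α-constacyclic code of length n over R with respect to θ_t of order k, α a unit fixed by θ_t with α² = 1, and let l = gcd(n,k). Then C is an α-quasi-twisted code of index l: writing n = ml, whenever (c_{0,0},...,c_{0,l-1},...,c_{m-1,0},...,c_{m-1,l-1}) ∈ C, also (αc_{m-1,0},...,αc_{m-1,l-1}, c_{0,0},...,c_{0,l-1},...,c_{m-2,0},...,c_{m-2,l-1}) ∈ C. -/

import Mathlib

/-- The standard form `a + u*b + v*c + u*v*d` of an element of
`R = F_q + uF_q + vF_q + uvF_q`. -/
def stdForm (F R : Type*) [Field F] [CommRing R] [Algebra F R] (u v : R)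
    (x : F × F × F × F) : R :=
  algebraMap F R x.1 + u * algebraMap F R x.2.1 + v * algebraMap F R x.2.2.1
    + u * v * algebraMap F R x.2.2.2

/-- The skew `α`-constacyclic shift `τ_α` with respect to `θ`. -/
def skewConstaShift {R : Type*} [Mul R] [One R] [DecidableEq R] (θ : R → R) (α : R)
    {n : ℕ} [NeZero n] (x : Fin n → R) : Fin n → R :=
  fun i => (if i = 0 then α else 1) * θ (x (i - 1))

open Fin.NatCast

lemma count_succ (n : ℕ) [NeZero n] (i : Fin n) (M : ℕ) :
    (((Finset.range (M+1)).filter (fun j => ((j : ℕ) : Fin n) = i)).card)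
      = (((Finset.range M).filter (fun j => ((j : ℕ) : Fin n) = i)).card)
        + if ((M : ℕ) : Fin n) = i then 1 else 0 := by
  rw [Finset.range_add_one, Finset.filter_insert]
  split_ifs with h
  · rw [Finset.card_insert_of_notMem (by simp)]
  · rfl

lemma cast_eq_iff (n : ℕ) [NeZero n] (i : Fin n) (Q r : ℕ) (hr : r < n) :
    (((Q * n + r : ℕ) : Fin n) = i) ↔ (r = (i : ℕ)) := by
  rw [Fin.ext_iff, Fin.val_natCast, Nat.add_comm, Nat.add_mul_mod_self_right,
    Nat.mod_eq_of_lt hr]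

lemma count_aux (n : ℕ) [NeZero n] (i : Fin n) :
    ∀ Q r, r ≤ n →
      (((Finset.range (Q * n + r)).filter (fun j => ((j : ℕ) : Fin n) = i)).card)
        = Q + if (i : ℕ) < r then 1 else 0 := by
  have step : ∀ Q r, r < n →
      ((((Finset.range (Q * n + r)).filter (fun j => ((j : ℕ) : Fin n) = i)).card)
        = Q + (if (i : ℕ) < r then 1 else 0)) →
      (((Finset.range (Q * n + (r+1))).filter (fun j => ((j : ℕ) : Fin n) = i)).card)
        = Q + (if (i : ℕ) < r + 1 then 1 else 0) := by
    intro Q r hr ih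
    have : Q * n + (r+1) = (Q*n + r) + 1 := by omega
    rw [this, count_succ, ih]
    simp only [cast_eq_iff n i Q r hr]
    have := i.isLt
    split_ifs <;> omega
  intro Q
  induction Q with
  | zero =>
    intro r
    induction r with
    | zero => simp
    | succ r ihr =>
      intro h
      exact step 0 r h (ihr (by omega))
  | succ Q ihQ =>
    intro r
    induction r with
    | zero =>
      intro _
      have h1 : (Q+1) * n + 0 = Q * n + n := by ring
      rw [h1, ihQ n le_rfl]
      have := i.isLt
      split_ifs <;> omega
    | succ r ihr =>
      intro h
      exact step (Q+1) r h (ihr (by omega))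

lemma tau_iter {R : Type*} [CommRing R] [DecidableEq R] {n : ℕ} [NeZero n]
    (θ : R → R) (α : R)
    (hmul : ∀ (N : ℕ) (y : R), θ^[N] (α * y) = α * θ^[N] y) :
    ∀ (N : ℕ) (x : Fin n → R) (i : Fin n),
    (skewConstaShift θ α)^[N] x i
      = α ^ (((Finset.range N).filter (fun j => ((j : ℕ) : Fin n) = i)).card)
        * θ^[N] (x (i - ((N : ℕ) : Fin n))) := by
  intro N
  induction N with
  | zero => simp
  | succ N ih =>
    intro x i
    rw [Function.iterate_succ_apply, ih, count_succ]
    show _ = α ^ (_ + if ((N:ℕ) : Fin n) = i then 1 else 0) * θ^[N+1] (x (i - ((N+1 : ℕ) : Fin n)))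
    have hsub : i - ((N:ℕ) : Fin n) - 1 = i - (((N+1 : ℕ)) : Fin n) := by
      have : ((N+1 : ℕ) : Fin n) = ((N:ℕ) : Fin n) + 1 := by push_cast; ring
      rw [this, sub_sub]
    have hτ : (skewConstaShift θ α x) (i - ((N:ℕ) : Fin n))
        = (if ((N:ℕ) : Fin n) = i then α else 1) * θ (x (i - ((N+1 : ℕ) : Fin n))) := by
      unfold skewConstaShift
      rw [hsub]
      congr 1
      simp [sub_eq_zero, eq_comm]
    rw [hτ]
    split_ifs with h
    · rw [hmul, ← Function.iterate_succ_apply, pow_succ]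
      ring
    · rw [one_mul, ← Function.iterate_succ_apply, add_zero]

lemma stdForm_mul (F R : Type*) [Field F] [CommRing R] [Algebra F R] (u v : R)
    (hu : u * u = u) (hv : v * v = v) (a b c d a' b' c' d' : F) :
    stdForm F R u v (a, b, c, d) * stdForm F R u v (a', b', c', d')
      = stdForm F R u v (a * a', a * b' + b * a' + b * b', a * c' + c * a' + c * c',
          a * d' + d * a' + b * c' + c * b' + b * d' + d * b' + c * d' + d * c' + d * d') := by
  simp only [stdForm, map_add, map_mul]
  linear_combination (algebraMap F R b * algebraMap F R b'
      + v * (algebraMap F R b * algebraMap F R d' + algebraMap F R d * algebraMap F R b')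
      + v * v * (algebraMap F R d * algebraMap F R d')) * hu
    + (algebraMap F R c * algebraMap F R c'
      + u * (algebraMap F R c * algebraMap F R d' + algebraMap F R d * algebraMap F R c')
      + u * (algebraMap F R d * algebraMap F R d')) * hv

lemma theta_mul (F R : Type*) [Field F] [CommRing R] [Algebra F R] (u v : R)
    (hu : u * u = u) (hv : v * v = v) (p t : ℕ) [Fact p.Prime] [CharP F p]
    (hbij : Function.Bijective (stdForm F R u v))
    (θ : R → R)
    (hθ : ∀ a b c d : F, θ (stdForm F R u v (a, b, c, d)) =
      stdForm F R u v (a ^ p ^ t, b ^ p ^ t, c ^ p ^ t, d ^ p ^ t)) :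
    ∀ x y : R, θ (x * y) = θ x * θ y := by
  intro x y
  obtain ⟨⟨a, b, c, d⟩, rfl⟩ := hbij.2 x
  obtain ⟨⟨a', b', c', d'⟩, rfl⟩ := hbij.2 y
  rw [stdForm_mul F R u v hu hv, hθ, hθ, hθ, stdForm_mul F R u v hu hv]
  congr 1
  simp [Prod.ext_iff, add_pow_char_pow, mul_pow]

theorem stmt15 (p m t : ℕ) (hp : p.Prime) (hodd : p ≠ 2) (ht : 0 < t) (htm : t ∣ m)
    (F : Type*) [Field F] [Fintype F] (hF : Fintype.card F = p ^ m)
    (R : Type*) [CommRing R] [DecidableEq R] [Algebra F R] (u v : R)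
    (hu : u * u = u) (hv : v * v = v)
    (hbij : Function.Bijective (stdForm F R u v))
    (θ : R → R)
    (hθ : ∀ a b c d : F, θ (stdForm F R u v (a, b, c, d)) =
      stdForm F R u v (a ^ p ^ t, b ^ p ^ t, c ^ p ^ t, d ^ p ^ t))
    -- k is the order of θ
    (k : ℕ) (hk0 : 0 < k) (hkid : θ^[k] = id)
    (hkmin : ∀ j : ℕ, 0 < j → j < k → θ^[j] ≠ id)
    (α : R) (hα : IsUnit α) (hαfix : θ α = α) (hα2 : α ^ 2 = 1)
    (n : ℕ) [NeZero n]
    (C : Submodule R (Fin n → R))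
    (hC : skewConstaShift θ α '' (C : Set (Fin n → R)) = C) :
    -- C is α-quasi-twisted of index l = gcd(n,k): shifting any codeword by l positions,
    -- with the l wrapped-around entries multiplied by α, stays in C
    ∀ c ∈ C,
      (fun i : Fin n =>
        (if (i : ℕ) < Nat.gcd n k then α else 1) * c (i - Fin.ofNat n (Nat.gcd n k))) ∈ C := by
  intro c hc
  simp only [Fin.ofNat_eq_cast]
  -- characteristic facts
  have hfact : Fact p.Prime := ⟨hp⟩
  have hm : 0 < m := by
    rcases Nat.eq_zero_or_pos m with h | h
    · rw [h, pow_zero] at hF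
      have := Fintype.one_lt_card (α := F)
      omega
    · exact h
  have hchar : CharP F p := by
    have h1 : CharP F (ringChar F) := ringChar.charP F
    obtain ⟨r, hrp, hrc⟩ := FiniteField.card F (ringChar F)
    have hdvd : p ∣ ringChar F ^ (r : ℕ) := by
      rw [← hrc, hF]; exact dvd_pow_self p hm.ne'
    have : ringChar F = p :=
      ((Nat.prime_dvd_prime_iff_eq hp hrp).mp (hp.dvd_of_dvd_pow hdvd)).symm
    rwa [this] at h1
  -- θ is multiplicative
  have θmul : ∀ x y : R, θ (x * y) = θ x * θ y :=
    theta_mul F R u v hu hv p t hbij θ hθ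
  have hmulα : ∀ (N : ℕ) (y : R), θ^[N] (α * y) = α * θ^[N] y := by
    intro N
    induction N with
    | zero => simp
    | succ N ih =>
      intro y
      rw [Function.iterate_succ_apply, θmul, hαfix, ih, Function.iterate_succ_apply]
  -- stability of C
  have hstep : ∀ x ∈ C, skewConstaShift θ α x ∈ C := by
    intro x hx
    have : skewConstaShift θ α x ∈ skewConstaShift θ α '' (C : Set (Fin n → R)) :=
      ⟨x, hx, rfl⟩
    rwa [hC] at this
  have hiterC : ∀ (N : ℕ) (x : Fin n → R), x ∈ C → (skewConstaShift θ α)^[N] x ∈ C := by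
    intro N
    induction N with
    | zero => intro x hx; simpa using hx
    | succ N ih =>
      intro x hx
      rw [Function.iterate_succ_apply]
      exact ih _ (hstep x hx)
  set l := Nat.gcd n k with hldef
  have hn0 : 0 < n := Nat.pos_of_ne_zero (NeZero.ne n)
  have hl0 : 0 < l := Nat.gcd_pos_of_pos_left k hn0
  have hln : l ≤ n := Nat.le_of_dvd hn0 (Nat.gcd_dvd_left n k)
  rcases eq_or_lt_of_le hln with hleq | hllt
  · -- l = n : the map is just multiplication by α
    have hcast : ((l : ℕ) : Fin n) = 0 := by
      rw [hleq, Fin.natCast_self]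
    have : (fun i : Fin n => (if (i : ℕ) < l then α else 1) * c (i - ((l : ℕ) : Fin n)))
        = α • c := by
      funext i
      have hi : (i : ℕ) < l := by have := i.isLt; omega
      simp [hcast, hi]
    rw [this]
    exact C.smul_mem α hc
  · -- l < n : use a suitable iterate of the shift
    have hex : ∃ s : ℕ, (k * s) % n = l % n := by
      have hBez := Nat.gcd_eq_gcd_ab n k
      set A := Nat.gcdA n k
      set B := Nat.gcdB n k
      refine ⟨(B % (n : ℤ)).toNat, ?_⟩
      have hnz : (n : ℤ) ≠ 0 := by exact_mod_cast hn0.ne'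
      have hsb : ((((B % (n : ℤ)).toNat : ℕ)) : ℤ) % n = B % n := by
        rw [Int.toNat_of_nonneg (Int.emod_nonneg B hnz)]
        exact Int.emod_emod_of_dvd B dvd_rfl
      have e1 : Int.ModEq n ((B % (n : ℤ)).toNat : ℤ) B := hsb
      have e2 : Int.ModEq n ((k : ℤ) * ((B % (n : ℤ)).toNat : ℤ)) ((k : ℤ) * B) :=
        e1.mul_left _
      have e3 : Int.ModEq n ((k : ℤ) * B) (l : ℤ) := by
        have hdiff : (l : ℤ) - (k : ℤ) * B = (n : ℤ) * A := by
          rw [hldef]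
          push_cast [hBez]
          ring
        exact Int.modEq_iff_dvd.mpr ⟨A, hdiff⟩
      have e4 : Int.ModEq n ((k * (B % (n : ℤ)).toNat : ℕ) : ℤ) (l : ℤ) := by
        push_cast
        exact e2.trans e3
      have : (((k * (B % (n : ℤ)).toNat) % n : ℕ) : ℤ) = ((l % n : ℕ) : ℤ) := by
        push_cast
        exact e4
      exact_mod_cast this
    obtain ⟨s, hs⟩ := hex
    rw [Nat.mod_eq_of_lt hllt] at hs
    set N := k * s with hNdef
    have hNid : θ^[N] = id := by
      rw [hNdef, Function.iterate_mul, hkid, Function.iterate_id]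
    set Q := N / n with hQdef
    have hNQ : N = Q * n + l := by
      have h := Nat.div_add_mod N n
      rw [hQdef, Nat.mul_comm (N / n) n, ← hs]
      exact h.symm
    have hcast : ((N : ℕ) : Fin n) = ((l : ℕ) : Fin n) := by
      apply Fin.ext
      rw [Fin.val_natCast, Fin.val_natCast, hs, Nat.mod_eq_of_lt hllt]
    have hτN : ∀ i : Fin n, (skewConstaShift θ α)^[N] c i
        = α ^ (Q + if (i : ℕ) < l then 1 else 0) * c (i - ((l : ℕ) : Fin n)) := by
      intro i
      rw [tau_iter θ α hmulα N c i, hNid, hcast]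
      rw [show (Finset.range N) = Finset.range (Q * n + l) from by rw [← hNQ]]
      rw [count_aux n i Q l (le_of_lt hllt)]
      simp
    have hone : α ^ Q * α ^ Q = 1 := by
      rw [← pow_add, ← two_mul, pow_mul, hα2, one_pow]
    have heq : (fun i : Fin n => (if (i : ℕ) < l then α else 1) * c (i - ((l : ℕ) : Fin n)))
        = α ^ Q • (skewConstaShift θ α)^[N] c := by
      funext i
      rw [Pi.smul_apply, smul_eq_mul, hτN i]
      split_ifs with h
      · linear_combination (-(α * c (i - ((l : ℕ) : Fin n)))) * hone
      · linear_combination (-(c (i - ((l : ℕ) : Fin n)))) * hone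
    rw [heq]
    exact C.smul_mem _ (hiterC N c hc)
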